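/- The smallest eigenvalue of A(ν) satisfies α_1(ν) ~ L·ν^{1−L} as ν → ∞, i.e., ν^{L−1}·α_1(ν) → L. -/

import Mathlib

open Filter

/-- The `L×L` matrix `A(ν)`: the negative of the generator, restricted to the
transient states `{1,…,L}`, of the birth–death process on `{0,1,…,L}` in which
state `l` has birth rate `(L−l)ν` and death rate `l`, and state `0` is
absorbing.  Index `i : Fin L` represents the state `l = i + 1`. -/
noncomputable def birthDeathMat (L : ℕ) (ν : ℝ) : Matrix (Fin L) (Fin L) ℝ :=
  Matrix.of fun i j =>
    if j = i then ((L : ℝ) - ((i : ℕ) + 1)) * ν + ((i : ℕ) + 1)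
    else if (j : ℕ) = (i : ℕ) + 1 then -(((L : ℝ) - ((i : ℕ) + 1)) * ν)
    else if (j : ℕ) + 1 = (i : ℕ) then -(((i : ℕ) + 1 : ℝ))
    else 0

namespace BDaux

open Matrix Polynomial

noncomputable def ent (L : ℕ) (ν x : ℝ) (i j : ℕ) : ℝ :=
  if j = i then ((L : ℝ) - (i + 1)) * ν + (i + 1) - x
  else if j = i + 1 then -(((L : ℝ) - (i + 1)) * ν)
  else if j + 1 = i then -((i + 1 : ℝ))
  else 0

noncomputable def tri (L : ℕ) (ν x : ℝ) (n : ℕ) : Matrix (Fin n) (Fin n) ℝ :=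
  Matrix.of fun i j => ent L ν x (i : ℕ) (j : ℕ)

noncomputable def dd (L : ℕ) (ν x : ℝ) (n : ℕ) : ℝ := (tri L ν x n).det

lemma tri_apply (L : ℕ) (ν x : ℝ) (n : ℕ) (i j : Fin n) :
    tri L ν x n i j = ent L ν x (i : ℕ) (j : ℕ) := rfl

lemma ent_eq_zero (L : ℕ) (ν x : ℝ) {i j : ℕ} (h1 : j ≠ i) (h2 : j ≠ i + 1)
    (h3 : j + 1 ≠ i) : ent L ν x i j = 0 := by
  rw [ent, if_neg h1, if_neg h2, if_neg h3]

@[simp] lemma dd_zero (L : ℕ) (ν x : ℝ) : dd L ν x 0 = 1 := Matrix.det_fin_zero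

lemma dd_one (L : ℕ) (ν x : ℝ) : dd L ν x 1 = ((L : ℝ) - 1) * ν + 1 - x := by
  rw [dd, Matrix.det_fin_one, tri_apply]
  simp [ent]

lemma val_succAbove {n : ℕ} (p : Fin (n + 1)) (k : Fin n) :
    ((p.succAbove k : Fin (n + 1)) : ℕ) = if (k : ℕ) < (p : ℕ) then (k : ℕ) else (k : ℕ) + 1 := by
  rw [Fin.succAbove]
  by_cases h : (k : ℕ) < (p : ℕ)
  · rw [if_pos h, if_pos (by simpa [Fin.lt_def] using h)]; rfl
  · rw [if_neg h, if_neg (by simpa [Fin.lt_def] using h)]; rfl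

lemma dd_succ_succ (L : ℕ) (ν x : ℝ) (n : ℕ) :
    dd L ν x (n + 2) = (((L : ℝ) - (n + 2)) * ν + (n + 2) - x) * dd L ν x (n + 1)
      - ((n + 2 : ℝ) * (((L : ℝ) - (n + 1)) * ν)) * dd L ν x n := by
  have key : ∀ (m : ℕ) (i j : Fin m), tri L ν x m i j = ent L ν x i j := tri_apply L ν x
  have hsub1 : ((tri L ν x (n + 2)).submatrix (Fin.last (n + 1)).succAbove
      ((Fin.castSucc (Fin.last n)).succAbove)).submatrix (Fin.last n).succAbove
      (Fin.last n).succAbove = tri L ν x n := by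
    ext a b
    simp only [Matrix.submatrix_apply, key]
    congr 1 <;> rw [val_succAbove, val_succAbove] <;>
      simp [Fin.succAbove_last, val_succAbove, a.isLt, b.isLt, Nat.lt_succ,
        Nat.le_of_lt a.isLt, Nat.le_of_lt b.isLt]
  have hsub2 : (tri L ν x (n + 2)).submatrix (Fin.last (n + 1)).succAbove
      (Fin.last (n + 1)).succAbove = tri L ν x (n + 1) := by
    ext a b
    simp only [Matrix.submatrix_apply, key, Fin.succAbove_last]
    rfl
  have hmid : ((tri L ν x (n + 2)).submatrix (Fin.last (n + 1)).succAbove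
      ((Fin.castSucc (Fin.last n)).succAbove)).det
      = -(((L : ℝ) - (n + 1)) * ν) * dd L ν x n := by
    set S1 := (tri L ν x (n + 2)).submatrix (Fin.last (n + 1)).succAbove
      ((Fin.castSucc (Fin.last n)).succAbove) with hS1
    have hent : ∀ i : Fin (n + 1), S1 i (Fin.last n)
        = ent L ν x (i : ℕ) (n + 1) := by
      intro i
      rw [hS1, Matrix.submatrix_apply, key]
      congr 1
      · rw [val_succAbove]; simp [Nat.lt_succ, Nat.le_of_lt_succ i.isLt]
      · rw [val_succAbove]; simp
    rw [Matrix.det_succ_column S1 (Fin.last n), Fin.sum_univ_castSucc]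
    have hzero : ∀ i : Fin n, (-1 : ℝ) ^ ((Fin.castSucc i : ℕ) + (Fin.last n : ℕ))
        * S1 (Fin.castSucc i) (Fin.last n)
        * ((S1.submatrix (Fin.castSucc i).succAbove (Fin.last n).succAbove).det) = 0 := by
      intro i
      have hi : (i : ℕ) < n := i.isLt
      rw [hent, ent_eq_zero L ν x (by simp only [Fin.coe_castSucc]; omega)
        (by simp only [Fin.coe_castSucc]; omega) (by simp only [Fin.coe_castSucc]; omega)]
      ring
    rw [Finset.sum_eq_zero (fun i _ => hzero i), zero_add, hent, hsub1]
    have : ent L ν x (Fin.last n : ℕ) (n + 1) = -(((L : ℝ) - (n + 1)) * ν) := by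
      rw [ent]
      rw [if_neg (by simp), if_pos (by simp)]
      simp
    rw [this, ← dd]
    have : (-1 : ℝ) ^ ((Fin.last n : ℕ) + (Fin.last n : ℕ)) = 1 := by
      simp [← two_mul, pow_mul]
    rw [this]; ring
  rw [dd, Matrix.det_succ_row (tri L ν x (n + 2)) (Fin.last (n + 1)),
    Fin.sum_univ_castSucc, Fin.sum_univ_castSucc]
  have hzero : ∀ j : Fin n, (-1 : ℝ) ^ ((Fin.last (n + 1) : ℕ)
        + ((Fin.castSucc (Fin.castSucc j)) : ℕ))
      * tri L ν x (n + 2) (Fin.last (n + 1)) (Fin.castSucc (Fin.castSucc j))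
      * ((tri L ν x (n + 2)).submatrix (Fin.last (n + 1)).succAbove
          (Fin.castSucc (Fin.castSucc j)).succAbove).det = 0 := by
    intro j
    have hj : (j : ℕ) < n := j.isLt
    rw [key, ent_eq_zero L ν x (by simp only [Fin.coe_castSucc, Fin.val_last]; omega)
      (by simp only [Fin.coe_castSucc, Fin.val_last]; omega)
      (by simp only [Fin.coe_castSucc, Fin.val_last]; omega)]
    ring
  rw [Finset.sum_eq_zero (fun j _ => hzero j), zero_add, hmid, hsub2, key, key, ← dd]
  have e1 : ent L ν x (Fin.last (n + 1) : ℕ) ((Fin.castSucc (Fin.last n)) : ℕ)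
      = -((n + 2 : ℝ)) := by
    rw [ent, if_neg (by simp), if_neg (by simp; omega), if_pos (by simp)]
    push_cast; ring
  have e2 : ent L ν x (Fin.last (n + 1) : ℕ) (Fin.last (n + 1) : ℕ)
      = ((L : ℝ) - (n + 2)) * ν + (n + 2) - x := by
    rw [ent, if_pos rfl]
    push_cast; ring
  rw [e1, e2]
  have s1 : (-1 : ℝ) ^ ((Fin.last (n + 1) : ℕ) + ((Fin.castSucc (Fin.last n)) : ℕ)) = -1 := by
    simp only [Fin.val_last, Fin.coe_castSucc]
    have : n + 1 + n = 2 * n + 1 := by ring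
    rw [this, pow_succ, pow_mul]
    simp
  have s2 : (-1 : ℝ) ^ ((Fin.last (n + 1) : ℕ) + (Fin.last (n + 1) : ℕ)) = 1 := by
    simp [← two_mul, pow_mul]
  rw [s1, s2]
  ring

noncomputable def Ssum (L : ℕ) (ν x : ℝ) (m : ℕ) : ℝ :=
  ∑ j ∈ Finset.range m, ((m.factorial : ℝ) / ((j + 1).factorial : ℝ)) * dd L ν x j

noncomputable def Efun (L : ℕ) (ν x : ℝ) : ℕ → ℝ
  | 0 => 1
  | (m + 1) => dd L ν x (m + 1) - ((L : ℝ) - (m + 1)) * ν * dd L ν x m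

lemma Efun_succ (L : ℕ) (ν x : ℝ) (m : ℕ) :
    Efun L ν x (m + 1) = (m + 1 : ℝ) * Efun L ν x m - x * dd L ν x m := by
  cases m with
  | zero => simp [Efun, dd_one, dd_zero]; ring
  | succ k =>
      simp only [Efun]
      rw [show k + 1 + 1 = k + 2 from rfl, dd_succ_succ]
      push_cast
      ring

lemma Efun_eq (L : ℕ) (ν x : ℝ) (m : ℕ) :
    Efun L ν x m = (m.factorial : ℝ) - x * Ssum L ν x m := by
  induction m with
  | zero => simp [Efun, Ssum]
  | succ m ih =>
      have hS : Ssum L ν x (m + 1) = ((m : ℝ) + 1) * Ssum L ν x m + dd L ν x m := by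
        rw [Ssum, Finset.sum_range_succ, Ssum, Finset.mul_sum]
        congr 1
        · refine Finset.sum_congr rfl fun j hj => ?_
          rw [Nat.factorial_succ]
          push_cast
          ring
        · rw [div_self (by exact_mod_cast (Nat.factorial_pos (m + 1)).ne')]
          ring
      rw [Efun_succ, ih, hS, Nat.factorial_succ]
      push_cast
      ring

lemma dd_key (K : ℕ) (ν x : ℝ) :
    dd (K + 1) ν x (K + 1) = (((K + 1).factorial : ℝ)) - x * Ssum (K + 1) ν x (K + 1) := by
  rw [← Efun_eq]
  show dd (K + 1) ν x (K + 1)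
      = dd (K + 1) ν x (K + 1) - (((K + 1 : ℕ) : ℝ) - ((K : ℝ) + 1)) * ν * dd (K + 1) ν x K
  push_cast
  ring

lemma tri_eq_sub (L : ℕ) (ν x : ℝ) :
    tri L ν x L = birthDeathMat L ν - x • (1 : Matrix (Fin L) (Fin L) ℝ) := by
  ext i j
  rw [Matrix.sub_apply, Matrix.smul_apply, tri_apply]
  by_cases h : j = i
  · subst h
    simp [ent, birthDeathMat, Matrix.one_apply]
  · have h' : (j : ℕ) ≠ (i : ℕ) := by simpa [Fin.ext_iff] using h
    simp [ent, birthDeathMat, Matrix.one_apply, h, h', Ne.symm h]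

lemma eval_charpoly' {n : ℕ} (M : Matrix (Fin n) (Fin n) ℝ) (x : ℝ) :
    (M.charpoly).eval x = (x • (1 : Matrix (Fin n) (Fin n) ℝ) - M).det := by
  rw [Matrix.charpoly, ← Polynomial.coe_evalRingHom, RingHom.map_det]
  congr 1
  ext i j
  by_cases h : i = j
  · subst h
    simp [Matrix.charmatrix_apply, Matrix.one_apply, Matrix.smul_apply]
  · simp [Matrix.charmatrix_apply, Matrix.one_apply, Matrix.smul_apply, h,
      Matrix.diagonal_apply_ne _ h]

lemma det_sub_smul_one_eq_zero {n : ℕ} (M : Matrix (Fin n) (Fin n) ℝ) {x : ℝ}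
    (hx : x ∈ spectrum ℝ M) : (x • (1 : Matrix (Fin n) (Fin n) ℝ) - M).det = 0 := by
  have h := spectrum.mem_iff.mp hx
  rw [Algebra.algebraMap_eq_smul_one] at h
  by_contra hd
  exact h ((Matrix.isUnit_iff_isUnit_det _).mpr (isUnit_iff_ne_zero.mpr hd))

lemma charpoly_eq_prod {n : ℕ} (M : Matrix (Fin n) (Fin n) ℝ) (α : Fin n → ℝ)
    (hinj : Function.Injective α) (hspec : ∀ i, α i ∈ spectrum ℝ M) :
    M.charpoly = ∏ i, (X - C (α i)) := by
  have hmonic : M.charpoly.Monic := Matrix.charpoly_monic M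
  have hdeg : M.charpoly.natDegree = n := by
    rw [Matrix.charpoly_natDegree_eq_dim, Fintype.card_fin]
  have hroot : ∀ i, M.charpoly.eval (α i) = 0 := fun i => by
    rw [eval_charpoly']; exact det_sub_smul_one_eq_zero M (hspec i)
  set s : Multiset ℝ := Finset.univ.val.map α with hs
  have hnodup : s.Nodup := Multiset.Nodup.map hinj Finset.univ.nodup
  have hle : s ≤ M.charpoly.roots := by
    rw [Multiset.le_iff_subset hnodup]
    intro a ha
    rw [hs, Multiset.mem_map] at ha
    obtain ⟨i, _, rfl⟩ := ha
    rw [Polynomial.mem_roots hmonic.ne_zero]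
    exact hroot i
  have hdvd : (∏ i, (X - C (α i))) ∣ M.charpoly := by
    have := (Multiset.prod_X_sub_C_dvd_iff_le_roots hmonic.ne_zero s).mpr hle
    rwa [hs, Multiset.map_map, show Finset.univ.val.map ((fun a => X - C a) ∘ α)
      = Finset.univ.val.map (fun i => X - C (α i)) from rfl] at this
  have hqmonic : (∏ i : Fin n, (X - C (α i))).Monic :=
    monic_prod_of_monic _ _ fun i _ => monic_X_sub_C (α i)
  have hqdeg : (∏ i : Fin n, (X - C (α i))).natDegree = n := by
    rw [natDegree_prod_of_monic _ _ fun i _ => monic_X_sub_C (α i)]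
    simp
  exact Polynomial.eq_of_monic_of_dvd_of_natDegree_le hqmonic hmonic hdvd
    (by rw [hdeg, hqdeg])

lemma tendsto_const_div (c : ℝ) : Tendsto (fun ν : ℝ => c / ν) atTop (nhds 0) :=
  Tendsto.div_atTop tendsto_const_nhds tendsto_id

lemma tendsto_one_div_pow (m : ℕ) (hm : m ≠ 0) :
    Tendsto (fun ν : ℝ => 1 / ν ^ m) atTop (nhds 0) :=
  Tendsto.div_atTop tendsto_const_nhds (tendsto_pow_atTop hm)

lemma dd_asymp (L : ℕ) (b : ℝ → ℝ) (C : ℝ)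
    (hb : ∀ᶠ ν in atTop, 0 ≤ b ν ∧ b ν ≤ C) (m : ℕ) :
    Tendsto (fun ν => dd L ν (b ν) m / ν ^ m) atTop
      (nhds (∏ j ∈ Finset.range m, ((L : ℝ) - (j + 1)))) := by
  have hb0 : Tendsto (fun ν => b ν / ν) atTop (nhds 0) := by
    apply tendsto_of_tendsto_of_tendsto_of_le_of_le' tendsto_const_nhds (tendsto_const_div C)
    · filter_upwards [hb, eventually_gt_atTop (0 : ℝ)] with ν h1 h2
      exact div_nonneg h1.1 h2.le
    · filter_upwards [hb, eventually_gt_atTop (0 : ℝ)] with ν h1 h2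
      gcongr
      exact h1.2
  induction m using Nat.strong_induction_on with
  | _ m ih =>
    rcases m with (_ | _ | k)
    · simpa using (tendsto_const_nhds : Tendsto (fun _ : ℝ => (1 : ℝ)) atTop (nhds 1))
    · have heq : ∀ᶠ ν : ℝ in atTop, ((L : ℝ) - 1) + (1 / ν - b ν / ν)
          = dd L ν (b ν) 1 / ν ^ 1 := by
        filter_upwards [eventually_ne_atTop (0 : ℝ)] with ν hν
        rw [dd_one]
        field_simp
        ring
      have ht : Tendsto (fun ν : ℝ => ((L : ℝ) - 1) + (1 / ν - b ν / ν)) atTop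
          (nhds (((L : ℝ) - 1) + (0 - 0))) :=
        tendsto_const_nhds.add ((tendsto_const_div 1).sub hb0)
      have := ht.congr' heq
      simpa using this
    · have heq : ∀ᶠ ν : ℝ in atTop,
          (((L : ℝ) - (k + 2)) + ((k + 2 : ℝ) - b ν) / ν) * (dd L ν (b ν) (k + 1) / ν ^ (k + 1))
            - (((k + 2 : ℝ) * ((L : ℝ) - (k + 1))) / ν) * (dd L ν (b ν) k / ν ^ k)
          = dd L ν (b ν) (k + 2) / ν ^ (k + 2) := by
        filter_upwards [eventually_ne_atTop (0 : ℝ)] with ν hν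
        rw [dd_succ_succ]
        field_simp
        ring
      have h1 : Tendsto (fun ν : ℝ => ((k + 2 : ℝ) - b ν) / ν) atTop (nhds 0) := by
        have := (tendsto_const_div (k + 2 : ℝ)).sub hb0
        simp only [sub_div] at this ⊢
        simpa using this
      have ht : Tendsto (fun ν : ℝ =>
          (((L : ℝ) - (k + 2)) + ((k + 2 : ℝ) - b ν) / ν) * (dd L ν (b ν) (k + 1) / ν ^ (k + 1))
            - (((k + 2 : ℝ) * ((L : ℝ) - (k + 1))) / ν) * (dd L ν (b ν) k / ν ^ k)) atTop
          (nhds ((((L : ℝ) - (k + 2)) + 0)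
              * (∏ j ∈ Finset.range (k + 1), ((L : ℝ) - (j + 1)))
            - 0 * (∏ j ∈ Finset.range k, ((L : ℝ) - (j + 1))))) :=
        ((tendsto_const_nhds.add h1).mul (ih (k + 1) (by omega))).sub
          ((tendsto_const_div _).mul (ih k (by omega)))
      have := ht.congr' heq
      have hval : (∏ j ∈ Finset.range (k + 2), ((L : ℝ) - (j + 1)))
          = (((L : ℝ) - (k + 2)) + 0) * (∏ j ∈ Finset.range (k + 1), ((L : ℝ) - (j + 1)))
            - 0 * (∏ j ∈ Finset.range k, ((L : ℝ) - (j + 1))) := by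
        rw [Finset.prod_range_succ]
        push_cast
        ring
      rw [hval]
      exact this

lemma prod_range_sub_eq_factorial (K : ℕ) :
    (∏ j ∈ Finset.range K, (((K : ℝ) + 1) - ((j : ℝ) + 1))) = (K.factorial : ℝ) := by
  have hnat : ∀ K : ℕ, (∏ j ∈ Finset.range K, (K - j)) = K.factorial := by
    intro K
    induction K with
    | zero => simp
    | succ n ihn =>
        rw [Finset.prod_range_succ',
          show (∏ x ∈ Finset.range n, (n + 1 - (x + 1))) = ∏ x ∈ Finset.range n, (n - x) from
            Finset.prod_congr rfl fun x _ => by omega,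
          ihn, Nat.factorial_succ, Nat.sub_zero, Nat.mul_comm]
  rw [show (∏ j ∈ Finset.range K, (((K : ℝ) + 1) - ((j : ℝ) + 1)))
      = ∏ j ∈ Finset.range K, (((K - j : ℕ) : ℝ)) from Finset.prod_congr rfl fun j hj => by
    rw [Nat.cast_sub (le_of_lt (Finset.mem_range.mp hj))]; ring]
  rw [← Nat.cast_prod, hnat]

lemma Ssum_asymp (K : ℕ) (b : ℝ → ℝ) (C : ℝ)
    (hb : ∀ᶠ ν in atTop, 0 ≤ b ν ∧ b ν ≤ C) :
    Tendsto (fun ν => Ssum (K + 1) ν (b ν) (K + 1) / ν ^ K) atTop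
      (nhds (K.factorial : ℝ)) := by
  have hdd := dd_asymp (K + 1) b C hb
  -- split off the top term
  have hsplit : ∀ ν : ℝ, Ssum (K + 1) ν (b ν) (K + 1)
      = (∑ j ∈ Finset.range K,
          (((K + 1).factorial : ℝ) / ((j + 1).factorial : ℝ)) * dd (K + 1) ν (b ν) j)
        + dd (K + 1) ν (b ν) K := by
    intro ν
    rw [Ssum, Finset.sum_range_succ, div_self (by exact_mod_cast (Nat.factorial_pos (K+1)).ne'),
      one_mul]
  have hterm : ∀ j, j < K → Tendsto (fun ν : ℝ =>
      ((((K + 1).factorial : ℝ) / ((j + 1).factorial : ℝ)) * dd (K + 1) ν (b ν) j) / ν ^ K)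
      atTop (nhds 0) := by
    intro j hj
    have heq : ∀ᶠ ν : ℝ in atTop,
        (((K + 1).factorial : ℝ) / ((j + 1).factorial : ℝ)) * (dd (K + 1) ν (b ν) j / ν ^ j)
          * (1 / ν ^ (K - j))
        = ((((K + 1).factorial : ℝ) / ((j + 1).factorial : ℝ)) * dd (K + 1) ν (b ν) j) / ν ^ K := by
      filter_upwards [eventually_ne_atTop (0 : ℝ)] with ν hν
      rw [show ν ^ K = ν ^ j * ν ^ (K - j) by rw [← pow_add]; congr 1; omega]
      field_simp
    have ht := ((tendsto_const_nhds
        (x := (((K + 1).factorial : ℝ) / ((j + 1).factorial : ℝ)))).mul (hdd j)).mul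
      (tendsto_one_div_pow (K - j) (by omega))
    have := ht.congr' heq
    simpa using this
  have h1 : Tendsto (fun ν : ℝ => (∑ j ∈ Finset.range K,
      (((K + 1).factorial : ℝ) / ((j + 1).factorial : ℝ)) * dd (K + 1) ν (b ν) j) / ν ^ K)
      atTop (nhds 0) := by
    have := tendsto_finset_sum (Finset.range K)
      (fun j hj => hterm j (Finset.mem_range.mp hj))
    rw [Finset.sum_const_zero] at this
    refine this.congr fun ν => ?_
    rw [Finset.sum_div]
  have h2 : Tendsto (fun ν : ℝ => dd (K + 1) ν (b ν) K / ν ^ K) atTop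
      (nhds (K.factorial : ℝ)) := by
    have := hdd K
    rwa [show (∏ j ∈ Finset.range K, (((K + 1 : ℕ) : ℝ) - ((j : ℝ) + 1)))
        = (K.factorial : ℝ) by push_cast; exact prod_range_sub_eq_factorial K] at this
  have := h1.add h2
  rw [zero_add] at this
  refine this.congr fun ν => ?_
  rw [hsplit, add_div]

end BDaux

open BDaux Matrix Polynomial in
/-- Let `0 < α_1(ν) < ⋯ < α_L(ν)` denote the (real, distinct, strictly
positive) eigenvalues of `A(ν)`, for `ν > 0`.  Then
`α_1(ν) ~ L·ν^{1−L}` as `ν → ∞`, i.e. `ν^{L−1}·α_1(ν) → L`. -/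
theorem birthDeathMat_smallest_eigenvalue_asymptotics (L : ℕ) (hL : 1 ≤ L)
    (α : ℝ → Fin L → ℝ)
    (hα : ∀ ν : ℝ, 0 < ν → StrictMono (α ν) ∧ (∀ i, 0 < α ν i) ∧
      spectrum ℝ (birthDeathMat L ν) = Set.range (α ν)) :
    Tendsto (fun ν : ℝ => ν ^ (L - 1) * α ν ⟨0, by omega⟩)
      atTop (nhds (L : ℝ)) := by
  obtain ⟨K, rfl⟩ : ∃ K, L = K + 1 := ⟨L - 1, by omega⟩
  set A1 : ℝ → ℝ := fun ν => α ν ⟨0, by omega⟩ with hA1def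
  set C : ℝ := max 1 (((K + 1).factorial : ℝ)) with hCdef
  have hfacts : ∀ ν : ℝ, 0 < ν → (0 < A1 ν ∧ A1 ν ≤ C) ∧
      A1 ν * Ssum (K + 1) ν (A1 ν) (K + 1) = (((K + 1).factorial : ℝ)) := by
    intro ν hν
    obtain ⟨hmono, hpos, hspec⟩ := hα ν hν
    have hmem : ∀ i, α ν i ∈ spectrum ℝ (birthDeathMat (K + 1) ν) := fun i => by
      rw [hspec]; exact Set.mem_range_self i
    have hdetA : (birthDeathMat (K + 1) ν).det = (((K + 1).factorial : ℝ)) := by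
      have h0 : tri (K + 1) ν 0 (K + 1) = birthDeathMat (K + 1) ν := by
        rw [tri_eq_sub]; simp
      have hk := dd_key K ν 0
      rw [dd, h0] at hk
      simpa using hk
    have hprod : (∏ i, α ν i) = (((K + 1).factorial : ℝ)) := by
      have hcp := charpoly_eq_prod (birthDeathMat (K + 1) ν) (α ν) hmono.injective hmem
      have he := congrArg (Polynomial.eval 0) hcp
      rw [eval_charpoly', Polynomial.eval_prod] at he
      simp only [Polynomial.eval_sub, Polynomial.eval_X, Polynomial.eval_C, zero_sub] at he
      rw [zero_smul, zero_sub, Matrix.det_neg, hdetA, Fintype.card_fin] at he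
      rw [show (∏ i : Fin (K + 1), -(α ν i))
          = (-1 : ℝ) ^ (K + 1) * ∏ i, α ν i from by
        rw [show (∏ i : Fin (K + 1), -(α ν i)) = ∏ i : Fin (K + 1), (-1 : ℝ) * α ν i from
          Finset.prod_congr rfl fun i _ => (neg_one_mul _).symm,
          Finset.prod_mul_distrib, Finset.prod_const, Finset.card_univ, Fintype.card_fin]] at he
      exact (mul_left_cancel₀ (pow_ne_zero (K + 1) (by norm_num : (-1 : ℝ) ≠ 0)) he).symm
    have hApos : 0 < A1 ν := hpos _
    have hmin : ∀ i, A1 ν ≤ α ν i := fun i => hmono.monotone (by simp [Fin.le_def])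
    have hpow : A1 ν ^ (K + 1) ≤ (((K + 1).factorial : ℝ)) := by
      calc A1 ν ^ (K + 1) = ∏ _i : Fin (K + 1), A1 ν := by
            rw [Finset.prod_const, Finset.card_univ, Fintype.card_fin]
        _ ≤ ∏ i, α ν i := Finset.prod_le_prod (fun i _ => hApos.le) (fun i _ => hmin i)
        _ = _ := hprod
    have hub : A1 ν ≤ C := by
      by_contra h
      push_neg at h
      have h1 : (1 : ℝ) < A1 ν := lt_of_le_of_lt (le_max_left _ _) h
      have h2 : A1 ν ≤ A1 ν ^ (K + 1) := le_self_pow₀ h1.le (by omega)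
      have h3 := lt_of_le_of_lt (le_max_right 1 (((K + 1).factorial : ℝ))) h
      linarith
    have hroot : dd (K + 1) ν (A1 ν) (K + 1) = 0 := by
      rw [dd, tri_eq_sub]
      have h0 : ((A1 ν) • (1 : Matrix (Fin (K + 1)) (Fin (K + 1)) ℝ)
          - birthDeathMat (K + 1) ν).det = 0 :=
        det_sub_smul_one_eq_zero _ (hmem ⟨0, by omega⟩)
      rw [show birthDeathMat (K + 1) ν - (A1 ν) • (1 : Matrix (Fin (K + 1)) (Fin (K + 1)) ℝ)
          = -((A1 ν) • (1 : Matrix (Fin (K + 1)) (Fin (K + 1)) ℝ) - birthDeathMat (K + 1) ν)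
        from (neg_sub _ _).symm]
      rw [Matrix.det_neg, h0, mul_zero]
    have hiden := dd_key K ν (A1 ν)
    rw [hroot] at hiden
    exact ⟨⟨hApos, hub⟩, by linarith⟩
  have hb : ∀ᶠ ν in atTop, 0 ≤ A1 ν ∧ A1 ν ≤ C :=
    (eventually_gt_atTop 0).mono fun ν hν => ⟨(hfacts ν hν).1.1.le, (hfacts ν hν).1.2⟩
  have hS := Ssum_asymp K A1 C hb
  have hKfac : (K.factorial : ℝ) ≠ 0 := by exact_mod_cast (Nat.factorial_pos K).ne'
  have heq : ∀ᶠ ν : ℝ in atTop,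
      (((K + 1).factorial : ℝ)) / (Ssum (K + 1) ν (A1 ν) (K + 1) / ν ^ K)
      = ν ^ (K + 1 - 1) * A1 ν := by
    filter_upwards [eventually_gt_atTop (0 : ℝ)] with ν hν
    obtain ⟨⟨hApos, _⟩, hiden⟩ := hfacts ν hν
    have hνK : ν ^ K ≠ 0 := pow_ne_zero _ hν.ne'
    have hSne : Ssum (K + 1) ν (A1 ν) (K + 1) ≠ 0 := by
      intro h0
      rw [h0, mul_zero] at hiden
      exact (Nat.cast_pos.mpr (Nat.factorial_pos (K + 1))).ne' hiden.symm
    rw [Nat.add_sub_cancel, ← hiden]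
    field_simp
  have hdiv : Tendsto (fun ν : ℝ =>
      (((K + 1).factorial : ℝ)) / (Ssum (K + 1) ν (A1 ν) (K + 1) / ν ^ K)) atTop
      (nhds ((((K + 1).factorial : ℝ)) / (K.factorial : ℝ))) :=
    tendsto_const_nhds.div hS hKfac
  have hfin : ((((K + 1).factorial : ℝ)) / (K.factorial : ℝ)) = ((K + 1 : ℕ) : ℝ) := by
    rw [Nat.factorial_succ]
    push_cast
    field_simp
  rw [← hfin]
  exact hdiv.congr' heq
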